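/- arXiv:2305.02037 — 2 statements merged into one kernel-verified Lean document; each statement's English description precedes it below -/
import Mathlib

section
/- Let p be a prime and let r, n, k be positive integers with k(k−1) > 2n. Then there exists a finite p-group G and a subgroup N of G with [G,G] ≤ N ≤ Z(G) such that the quotient G/N is isomorphic to the direct power (C_{p^r})^n of n copies of the cyclic group of order p^r, and G contains no subgroup isomorphic to (C_{p^r})^{2k}. -/
open Finset Function

namespace Stmt6

/-! ### Bilinear forms from matrices -/

section bil
variable {R : Type} [CommRing R] {n : ℕ}

def bilf (M : Matrix (Fin n) (Fin n) R) (x y : Fin n → R) : R :=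
  ∑ i, ∑ j, M i j * x i * y j

variable (M M' : Matrix (Fin n) (Fin n) R) (x x' y y' : Fin n → R)

lemma bilf_add_left : bilf M (x + x') y = bilf M x y + bilf M x' y := by
  unfold bilf
  rw [← Finset.sum_add_distrib]
  refine Finset.sum_congr rfl fun i _ => ?_
  rw [← Finset.sum_add_distrib]
  refine Finset.sum_congr rfl fun j _ => ?_
  simp only [Pi.add_apply]; ring

lemma bilf_add_right : bilf M x (y + y') = bilf M x y + bilf M x y' := by
  unfold bilf
  rw [← Finset.sum_add_distrib]
  refine Finset.sum_congr rfl fun i _ => ?_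
  rw [← Finset.sum_add_distrib]
  refine Finset.sum_congr rfl fun j _ => ?_
  simp only [Pi.add_apply]; ring

lemma bilf_zero_left : bilf M 0 y = 0 := by
  unfold bilf
  refine Finset.sum_eq_zero fun i _ => Finset.sum_eq_zero fun j _ => ?_
  simp

lemma bilf_zero_right : bilf M x 0 = 0 := by
  unfold bilf
  refine Finset.sum_eq_zero fun i _ => Finset.sum_eq_zero fun j _ => ?_
  simp

lemma bilf_neg_left : bilf M (-x) y = - bilf M x y := by
  unfold bilf
  rw [← Finset.sum_neg_distrib]
  refine Finset.sum_congr rfl fun i _ => ?_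
  rw [← Finset.sum_neg_distrib]
  refine Finset.sum_congr rfl fun j _ => ?_
  simp only [Pi.neg_apply]; ring

lemma bilf_smul_left (c : R) : bilf M (c • x) y = c * bilf M x y := by
  unfold bilf
  rw [Finset.mul_sum]
  refine Finset.sum_congr rfl fun i _ => ?_
  rw [Finset.mul_sum]
  refine Finset.sum_congr rfl fun j _ => ?_
  simp only [Pi.smul_apply, smul_eq_mul]; ring

lemma bilf_smul_right (c : R) : bilf M x (c • y) = c * bilf M x y := by
  unfold bilf
  rw [Finset.mul_sum]
  refine Finset.sum_congr rfl fun i _ => ?_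
  rw [Finset.mul_sum]
  refine Finset.sum_congr rfl fun j _ => ?_
  simp only [Pi.smul_apply, smul_eq_mul]; ring

lemma bilf_matrix_add : bilf (M + M') x y = bilf M x y + bilf M' x y := by
  unfold bilf
  rw [← Finset.sum_add_distrib]
  refine Finset.sum_congr rfl fun i _ => ?_
  rw [← Finset.sum_add_distrib]
  refine Finset.sum_congr rfl fun j _ => ?_
  simp only [Matrix.add_apply]; ring

lemma bilf_matrix_sum {ι : Type} (s : Finset ι) (Ms : ι → Matrix (Fin n) (Fin n) R) :
    bilf (∑ q ∈ s, Ms q) x y = ∑ q ∈ s, bilf (Ms q) x y := by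
  unfold bilf
  calc ∑ i, ∑ j, (∑ q ∈ s, Ms q) i j * x i * y j
      = ∑ i, ∑ j, ∑ q ∈ s, Ms q i j * x i * y j := by
        refine Finset.sum_congr rfl fun i _ => Finset.sum_congr rfl fun j _ => ?_
        rw [Matrix.sum_apply, Finset.sum_mul, Finset.sum_mul]
    _ = ∑ i, ∑ q ∈ s, ∑ j, Ms q i j * x i * y j :=
        Finset.sum_congr rfl fun i _ => Finset.sum_comm
    _ = ∑ q ∈ s, ∑ i, ∑ j, Ms q i j * x i * y j := Finset.sum_comm

lemma bilf_matrix_smul (c : R) : bilf (c • M) x y = c * bilf M x y := by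
  unfold bilf
  rw [Finset.mul_sum]
  refine Finset.sum_congr rfl fun i _ => ?_
  rw [Finset.mul_sum]
  refine Finset.sum_congr rfl fun j _ => ?_
  simp only [Matrix.smul_apply, smul_eq_mul]; ring

lemma bilf_outer (f g : Fin n → R) :
    bilf (Matrix.of fun a b => f a * g b) x y = (∑ a, f a * x a) * (∑ b, g b * y b) := by
  unfold bilf
  rw [Finset.sum_mul_sum]
  refine Finset.sum_congr rfl fun i _ => ?_
  refine Finset.sum_congr rfl fun j _ => ?_
  simp only [Matrix.of_apply]
  ring

lemma bilf_map {S : Type} [CommRing S] (f : R →+* S) :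
    bilf (M.map f) (f ∘ x) (f ∘ y) = f (bilf M x y) := by
  unfold bilf
  rw [map_sum]
  refine Finset.sum_congr rfl fun i _ => ?_
  rw [map_sum]
  refine Finset.sum_congr rfl fun j _ => ?_
  simp [Matrix.map_apply]

end bil

/-! ### Counting helpers -/

lemma card_dvd_val (N d : ℕ) (hN : 0 < N) (hd : d ∣ N) :
    Nat.card {c : ZMod N // d ∣ c.val} = N / d := by
  haveI : NeZero N := ⟨hN.ne'⟩
  have hd0 : 0 < d := Nat.pos_of_dvd_of_pos hd hN
  have e : {c : ZMod N // d ∣ c.val} ≃ Fin (N / d) :=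
    { toFun := fun c => ⟨c.1.val / d, Nat.div_lt_div_of_lt_of_dvd hd (ZMod.val_lt c.1)⟩
      invFun := fun j => ⟨((d * (j : ℕ) : ℕ) : ZMod N), by
        rw [ZMod.val_natCast]
        exact (Nat.dvd_mod_iff hd).2 (Dvd.intro _ rfl)⟩
      left_inv := fun c => by
        apply Subtype.ext
        show ((d * (c.1.val / d) : ℕ) : ZMod N) = c.1
        rw [Nat.mul_div_cancel' c.2]
        exact ZMod.natCast_rightInverse c.1
      right_inv := fun j => by
        have hlt : d * (j : ℕ) < N := by
          calc d * (j : ℕ) < d * (N / d) :=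
                Nat.mul_lt_mul_of_pos_left j.isLt hd0
          _ = N := Nat.mul_div_cancel' hd
        apply Fin.ext
        show (((d * (j : ℕ) : ℕ) : ZMod N)).val / d = (j : ℕ)
        rw [ZMod.val_natCast, Nat.mod_eq_of_lt hlt, Nat.mul_div_cancel_left _ hd0] }
  rw [Nat.card_congr e, Nat.card_eq_fintype_card, Fintype.card_fin]

lemma card_smul_eq (p r a : ℕ) (hp : 1 < p) (hr : 0 < r) (ha : a ≤ r) :
    Nat.card {c : ZMod (p ^ r) // (p ^ a) • c = 0} = p ^ a := by
  have hp0 : 0 < p := by omega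
  have hpr : 0 < p ^ r := pow_pos hp0 _
  haveI : NeZero (p ^ r) := ⟨hpr.ne'⟩
  have key : ∀ c : ZMod (p ^ r), (p ^ a) • c = 0 ↔ p ^ (r - a) ∣ c.val := by
    intro c
    have h1 : (p ^ a) • c = (((p ^ a * c.val : ℕ) : ZMod (p ^ r))) := by
      rw [nsmul_eq_mul, Nat.cast_mul]
      congr 1
      exact (ZMod.natCast_rightInverse c).symm
    rw [h1, ZMod.natCast_eq_zero_iff]
    generalize c.val = m
    constructor
    · intro hdvd
      refine (Nat.mul_dvd_mul_iff_left (pow_pos hp0 a)).1 ?_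
      rwa [← pow_add, (by omega : a + (r - a) = r)]
    · intro hdvd
      have h3 : p ^ a * p ^ (r - a) ∣ p ^ a * m := mul_dvd_mul_left _ hdvd
      rwa [← pow_add, (by omega : a + (r - a) = r)] at h3
  have e : {c : ZMod (p ^ r) // (p ^ a) • c = 0} ≃ {c : ZMod (p ^ r) // p ^ (r - a) ∣ c.val} :=
    Equiv.subtypeEquivRight key
  rw [Nat.card_congr e, card_dvd_val _ _ hpr (pow_dvd_pow _ (by omega))]
  rw [Nat.pow_div (by omega) hp0]
  congr 1; omega

lemma card_pi_smul (p r a m : ℕ) (hp : 1 < p) (hr : 0 < r) (ha : a ≤ r) :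
    Nat.card {x : Fin m → ZMod (p ^ r) // (p ^ a) • x = 0} = p ^ (a * m) := by
  classical
  have e1 : {x : Fin m → ZMod (p ^ r) // (p ^ a) • x = 0}
      ≃ {x : Fin m → ZMod (p ^ r) // ∀ i, (p ^ a) • x i = 0} :=
    Equiv.subtypeEquivRight (fun x => by
      constructor
      · intro hh i; exact congrFun hh i
      · intro hh; funext i; exact hh i)
  have e2 : {x : Fin m → ZMod (p ^ r) // ∀ i, (p ^ a) • x i = 0}
      ≃ (∀ _ : Fin m, {c : ZMod (p ^ r) // (p ^ a) • c = 0}) :=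
    Equiv.subtypePiEquivPi (p := fun (_ : Fin m) (c : ZMod (p ^ r)) => (p ^ a) • c = 0)
  rw [Nat.card_congr (e1.trans e2), Nat.card_pi]
  simp only [card_smul_eq p r a hp hr ha]
  rw [Finset.prod_const, Finset.card_univ, Fintype.card_fin, ← pow_mul]

lemma card_ker_range {A B : Type} [AddCommGroup A] [AddCommGroup B] (f : A →+ B) :
    Nat.card A = Nat.card f.range * Nat.card f.ker := by
  rw [AddSubgroup.card_eq_card_quotient_mul_card_addSubgroup f.ker]
  congr 1
  exact Nat.card_congr (QuotientAddGroup.quotientKerEquivRange f).toEquiv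

/-! ### Dual families -/

lemma exists_dual {F : Type} [Field F] {n k : ℕ} {u : Fin k → (Fin n → F)}
    (hu : LinearIndependent F u) :
    ∃ φ : Fin k → ((Fin n → F) →ₗ[F] F), ∀ i j, φ i (u j) = if i = j then 1 else 0 := by
  choose g hg using fun i => LinearMap.exists_extend ((Module.Basis.span hu).coord i)
  refine ⟨g, fun i j => ?_⟩
  have hj : ((Module.Basis.span hu j : Submodule.span F (Set.range u)) : Fin n → F) = u j := by
    rw [Module.Basis.span_apply]
  rw [← hj, ← Submodule.subtype_apply, ← LinearMap.comp_apply, hg i,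
    Module.Basis.coord_apply, Module.Basis.repr_self, Finsupp.single_apply]
  simp [eq_comm]

/-! ### Existence of good alternating form tuples -/

def emb {k : ℕ} (q : (i : Fin k) × Fin (i : ℕ)) : Fin k := Fin.castLE q.1.isLt.le q.2

lemma emb_lt {k : ℕ} (q : (i : Fin k) × Fin (i : ℕ)) : ((emb q) : ℕ) < (q.1 : ℕ) := q.2.isLt

def Phi {F : Type} [CommRing F] (n k : ℕ) (u : Fin k → Fin n → F) :
    (Fin k → Matrix (Fin n) (Fin n) F) →+ (Fin k → ((i : Fin k) × Fin (i : ℕ)) → F) :=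
  AddMonoidHom.mk'
    (fun B l q => bilf (B l) (u q.1) (u (emb q)) - bilf (B l) (u (emb q)) (u q.1))
    (by
      intro B B'
      funext l q
      simp only [Pi.add_apply, bilf_matrix_add]
      ring)

lemma Phi_apply {F : Type} [CommRing F] (n k : ℕ) (u : Fin k → Fin n → F)
    (B : Fin k → Matrix (Fin n) (Fin n) F) (l : Fin k) (q : (i : Fin k) × Fin (i : ℕ)) :
    Phi n k u B l q = bilf (B l) (u q.1) (u (emb q)) - bilf (B l) (u (emb q)) (u q.1) := rfl

lemma Phi_surj {F : Type} [Field F] {n k : ℕ} {u : Fin k → Fin n → F}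
    (hu : LinearIndependent F u) : Function.Surjective (Phi n k u) := by
  intro t
  obtain ⟨φ, hφ⟩ := exists_dual hu
  refine ⟨fun l => ∑ q : (i : Fin k) × Fin (i : ℕ), t l q • (Matrix.of fun a b =>
    (φ q.1 fun j' => if a = j' then (1:F) else 0) *
    (φ (emb q) fun j' => if b = j' then (1:F) else 0)), ?_⟩
  have expand : ∀ l (x y : Fin n → F),
      bilf (∑ q : (i : Fin k) × Fin (i : ℕ), t l q • (Matrix.of fun a b =>
        (φ q.1 fun j' => if a = j' then (1:F) else 0) *
        (φ (emb q) fun j' => if b = j' then (1:F) else 0))) x y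
      = ∑ q : (i : Fin k) × Fin (i : ℕ), t l q * (φ q.1 x * φ (emb q) y) := by
    intro l x y
    rw [bilf_matrix_sum]
    refine Finset.sum_congr rfl fun q _ => ?_
    rw [bilf_matrix_smul]
    congr 1
    have h1 : (∑ a, (φ q.1 fun j' => if a = j' then (1:F) else 0) * x a) = φ q.1 x := by
      rw [LinearMap.pi_apply_eq_sum_univ (φ q.1) x]
      exact Finset.sum_congr rfl fun a _ => by rw [smul_eq_mul, mul_comm]
    have h2 : (∑ b, (φ (emb q) fun j' => if b = j' then (1:F) else 0) * y b) = φ (emb q) y := by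
      rw [LinearMap.pi_apply_eq_sum_univ (φ (emb q)) y]
      exact Finset.sum_congr rfl fun a _ => by rw [smul_eq_mul, mul_comm]
    rw [bilf_outer (f := fun a => φ q.1 fun j' => if a = j' then (1:F) else 0)
      (g := fun b => φ (emb q) fun j' => if b = j' then (1:F) else 0) (x := x) (y := y), h1, h2]
  funext l q₀
  rw [Phi_apply, expand, expand]
  have hfirst : ∑ q : (i : Fin k) × Fin (i : ℕ),
      t l q * (φ q.1 (u q₀.1) * φ (emb q) (u (emb q₀))) = t l q₀ := by
    rw [Finset.sum_eq_single q₀]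
    · rw [hφ, hφ]; simp
    · intro q _ hq
      rcases q with ⟨i, j⟩; rcases q₀ with ⟨i₀, j₀⟩
      by_cases hi : i = i₀
      · subst hi
        have hj : j ≠ j₀ := fun hj => hq (by rw [hj])
        rw [hφ, hφ]
        have hne : emb ⟨i, j⟩ ≠ emb ⟨i, j₀⟩ := by
          intro he
          apply hj
          apply Fin.ext
          have := congrArg Fin.val he
          simpa [emb] using this
        simp [hne]
      · rw [hφ]
        simp [hi]
    · intro hq₀; exact absurd (Finset.mem_univ q₀) hq₀
  have hsecond : ∑ q : (i : Fin k) × Fin (i : ℕ),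
      t l q * (φ q.1 (u (emb q₀)) * φ (emb q) (u q₀.1)) = 0 := by
    refine Finset.sum_eq_zero fun q _ => ?_
    rw [hφ, hφ]
    by_cases h1 : q.1 = emb q₀
    · by_cases h2 : emb q = q₀.1
      · exfalso
        have e1 : (q.1 : ℕ) = ((q₀.2 : ℕ)) := by rw [h1]; rfl
        have e2 : ((emb q) : ℕ) = (q₀.1 : ℕ) := by rw [h2]
        have l1 := emb_lt q
        have l2 := emb_lt q₀
        omega
      · simp [h2]
    · simp [h1]
  rw [hfirst, hsecond, sub_zero]

open scoped Classical in
lemma exists_good (p n k : ℕ) [Fact p.Prime] (hk : 0 < k) (h : 2 * n < k * (k - 1)) :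
    ∃ A : Fin k → Matrix (Fin n) (Fin n) (ZMod p),
      ¬ ∃ u : Fin k → (Fin n → ZMod p), LinearIndependent (ZMod p) u ∧
        ∀ l i j, bilf (A l) (u i) (u j) = bilf (A l) (u j) (u i) := by
  have hp1 : 1 < p := (Fact.out : p.Prime).one_lt
  haveI : NeZero p := ⟨by omega⟩
  have cQ : 2 * Fintype.card ((i : Fin k) × Fin (i : ℕ)) = k * (k - 1) := by
    rw [Fintype.card_sigma]
    simp only [Fintype.card_fin]
    rw [Fin.sum_univ_eq_sum_range (fun i => i) k, mul_comm]
    exact Finset.sum_range_id_mul_two k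
  by_contra hcon
  push_neg at hcon
  have hT : Fintype.card (Fin k → (Fin n → ZMod p)) <
      Fintype.card (Fin k → ((i : Fin k) × Fin (i : ℕ)) → ZMod p) := by
    rw [Fintype.card_fun, Fintype.card_fun, Fintype.card_fun, Fintype.card_fun,
      ZMod.card, Fintype.card_fin, Fintype.card_fin]
    have hn : n < Fintype.card ((i : Fin k) × Fin (i : ℕ)) := by omega
    exact Nat.pow_lt_pow_left (Nat.pow_lt_pow_right hp1 hn) (by omega)
  let indepS : Finset (Fin k → (Fin n → ZMod p)) :=
    univ.filter (fun u => LinearIndependent (ZMod p) u)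
  have hsub : (univ : Finset (Fin k → Matrix (Fin n) (Fin n) (ZMod p))) ⊆
      indepS.biUnion (fun u => univ.filter (fun B => Phi n k u B = 0)) := by
    intro B _
    obtain ⟨u, hu, hcond⟩ := hcon B
    refine Finset.mem_biUnion.2 ⟨u, Finset.mem_filter.2 ⟨Finset.mem_univ _, hu⟩,
      Finset.mem_filter.2 ⟨Finset.mem_univ _, ?_⟩⟩
    funext l q
    rw [Phi_apply, hcond l q.1 (emb q), sub_self]
    rfl
  have hcount : ∀ u ∈ indepS, (univ.filter (fun B => Phi n k u B = 0)).card *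
      Fintype.card (Fin k → ((i : Fin k) × Fin (i : ℕ)) → ZMod p) =
      Fintype.card (Fin k → Matrix (Fin n) (Fin n) (ZMod p)) := by
    intro u hu
    have hu' : LinearIndependent (ZMod p) u := (Finset.mem_filter.1 hu).2
    have h1 := card_ker_range (Phi n k u)
    have h2 : Nat.card (Phi n k u).range =
        Nat.card (Fin k → ((i : Fin k) × Fin (i : ℕ)) → ZMod p) := by
      have hr : (Phi n k u).range = ⊤ := AddMonoidHom.range_eq_top.2 (Phi_surj hu')
      rw [hr]
      exact Nat.card_congr AddSubgroup.topEquiv.toEquiv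
    have h3 : (univ.filter (fun B => Phi n k u B = 0)).card = Nat.card (Phi n k u).ker := by
      rw [Nat.card_eq_fintype_card, ← Fintype.card_subtype]
      exact (Fintype.card_congr (Equiv.subtypeEquivRight (fun B =>
        AddMonoidHom.mem_ker))).symm
    rw [h3, mul_comm, ← Nat.card_eq_fintype_card
        (α := Fin k → ((i : Fin k) × Fin (i : ℕ)) → ZMod p),
      ← Nat.card_eq_fintype_card (α := Fin k → Matrix (Fin n) (Fin n) (ZMod p)), ← h2]
    exact h1.symm
  have step1 : Fintype.card (Fin k → Matrix (Fin n) (Fin n) (ZMod p)) ≤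
      ∑ u ∈ indepS, (univ.filter (fun B => Phi n k u B = 0)).card := by
    calc Fintype.card (Fin k → Matrix (Fin n) (Fin n) (ZMod p))
        = (univ : Finset (Fin k → Matrix (Fin n) (Fin n) (ZMod p))).card := Finset.card_univ.symm
      _ ≤ (indepS.biUnion (fun u => univ.filter (fun B => Phi n k u B = 0))).card :=
          Finset.card_le_card hsub
      _ ≤ ∑ u ∈ indepS, (univ.filter (fun B => Phi n k u B = 0)).card := Finset.card_biUnion_le
  have step2 : Fintype.card (Fin k → Matrix (Fin n) (Fin n) (ZMod p)) *
      Fintype.card (Fin k → ((i : Fin k) × Fin (i : ℕ)) → ZMod p) ≤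
      indepS.card * Fintype.card (Fin k → Matrix (Fin n) (Fin n) (ZMod p)) := by
    calc Fintype.card (Fin k → Matrix (Fin n) (Fin n) (ZMod p)) *
        Fintype.card (Fin k → ((i : Fin k) × Fin (i : ℕ)) → ZMod p)
        ≤ (∑ u ∈ indepS, (univ.filter (fun B => Phi n k u B = 0)).card) *
            Fintype.card (Fin k → ((i : Fin k) × Fin (i : ℕ)) → ZMod p) :=
          Nat.mul_le_mul_right _ step1
      _ = ∑ u ∈ indepS, (univ.filter (fun B => Phi n k u B = 0)).card *
            Fintype.card (Fin k → ((i : Fin k) × Fin (i : ℕ)) → ZMod p) := Finset.sum_mul _ _ _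
      _ = ∑ _u ∈ indepS, Fintype.card (Fin k → Matrix (Fin n) (Fin n) (ZMod p)) :=
            Finset.sum_congr rfl hcount
      _ = indepS.card * Fintype.card (Fin k → Matrix (Fin n) (Fin n) (ZMod p)) := by
            rw [Finset.sum_const, smul_eq_mul]
  have hindep : indepS.card <
      Fintype.card (Fin k → ((i : Fin k) × Fin (i : ℕ)) → ZMod p) := by
    have h5 : indepS.card ≤ Fintype.card (Fin k → (Fin n → ZMod p)) := by
      rw [← Finset.card_univ]
      exact Finset.card_le_card (Finset.filter_subset _ _)
    omega
  have step3 : indepS.card * Fintype.card (Fin k → Matrix (Fin n) (Fin n) (ZMod p)) <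
      Fintype.card (Fin k → ((i : Fin k) × Fin (i : ℕ)) → ZMod p) *
      Fintype.card (Fin k → Matrix (Fin n) (Fin n) (ZMod p)) :=
    mul_lt_mul_of_pos_right hindep Fintype.card_pos
  have hfin := lt_of_le_of_lt step2 step3
  rw [mul_comm] at hfin
  exact lt_irrefl _ hfin

/-! ### The central extension group -/

structure Gr (p r n k : ℕ) (M : Fin k → Matrix (Fin n) (Fin n) (ZMod (p ^ r))) : Type where
  v : Fin n → ZMod (p ^ r)
  w : Fin k → ZMod (p ^ r)

namespace Gr

variable {p r n k : ℕ} {M : Fin k → Matrix (Fin n) (Fin n) (ZMod (p ^ r))}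

lemma ext' {x y : Gr p r n k M} (hv : x.v = y.v) (hw : x.w = y.w) : x = y := by
  cases x; cases y; cases hv; cases hw; rfl

instance : Mul (Gr p r n k M) :=
  ⟨fun x y => ⟨x.v + y.v, x.w + y.w + fun l => bilf (M l) x.v y.v⟩⟩
instance : One (Gr p r n k M) := ⟨⟨0, 0⟩⟩
instance : Inv (Gr p r n k M) :=
  ⟨fun x => ⟨-x.v, -x.w + fun l => bilf (M l) x.v x.v⟩⟩

lemma mul_v (x y : Gr p r n k M) : (x * y).v = x.v + y.v := rfl
lemma mul_w (x y : Gr p r n k M) :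
    (x * y).w = x.w + y.w + fun l => bilf (M l) x.v y.v := rfl
lemma one_v : (1 : Gr p r n k M).v = 0 := rfl
lemma one_w : (1 : Gr p r n k M).w = 0 := rfl
lemma inv_v (x : Gr p r n k M) : (x⁻¹).v = -x.v := rfl
lemma inv_w (x : Gr p r n k M) : (x⁻¹).w = -x.w + fun l => bilf (M l) x.v x.v := rfl

instance : Group (Gr p r n k M) :=
  Group.ofLeftAxioms
    (fun x y z => by
      apply ext'
      · simp only [mul_v, add_assoc]
      · simp only [mul_w, mul_v]
        funext l
        simp only [Pi.add_apply, bilf_add_left, bilf_add_right]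
        ring)
    (fun x => by
      apply ext'
      · simp only [mul_v, one_v, zero_add]
      · simp only [mul_w, one_w, one_v]
        funext l
        simp only [Pi.add_apply, bilf_zero_left, Pi.zero_apply]
        ring)
    (fun x => by
      apply ext'
      · simp only [mul_v, inv_v, one_v, neg_add_cancel]
      · simp only [mul_w, inv_v, inv_w, one_w]
        funext l
        simp only [Pi.add_apply, Pi.neg_apply, bilf_neg_left, Pi.zero_apply]
        ring)

def toProd : Gr p r n k M ≃ ((Fin n → ZMod (p ^ r)) × (Fin k → ZMod (p ^ r))) where
  toFun x := (x.v, x.w)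
  invFun y := ⟨y.1, y.2⟩
  left_inv x := rfl
  right_inv y := rfl

lemma central_pow (a : Fin k → ZMod (p ^ r)) (m : ℕ) :
    (⟨0, a⟩ : Gr p r n k M) ^ m = ⟨0, m • a⟩ := by
  induction m with
  | zero => rw [pow_zero, zero_smul]; rfl
  | succ m ih =>
    rw [pow_succ, ih]
    apply ext'
    · show (0 : Fin n → ZMod (p ^ r)) + 0 = 0
      simp
    · show m • a + a + (fun l => bilf (M l) (0 : Fin n → ZMod (p ^ r)) 0) = (m + 1) • a
      funext l
      simp only [Pi.add_apply, bilf_zero_left, Pi.smul_apply, succ_nsmul, add_zero]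

end Gr

end Stmt6


/-- For any prime `p` and positive integers `r, n, k` with `k(k-1) > 2n`, there is a
finite `p`-group `G` and a subgroup `N` with `[G,G] ≤ N ≤ Z(G)` such that
`G/N ≃ (C_{p^r})ⁿ` (expressed via a surjective homomorphism onto `(C_{p^r})ⁿ` with
kernel `N`) and `G` contains no subgroup isomorphic to `(C_{p^r})^{2k}`. -/
theorem stmt_6 (p r n k : ℕ) (hp : p.Prime) (hr : 0 < r) (hn : 0 < n) (hk : 0 < k)
    (h : k * (k - 1) > 2 * n) :
    ∃ (G : Type) (_ : Group G) (_ : Finite G), IsPGroup p G ∧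
      ∃ N : Subgroup G,
        commutator G ≤ N ∧ N ≤ Subgroup.center G ∧
        (∃ f : G →* Multiplicative (Fin n → ZMod (p ^ r)),
          Function.Surjective f ∧ f.ker = N) ∧
        ¬ ∃ H : Subgroup G,
            Nonempty (H ≃* Multiplicative (Fin (2 * k) → ZMod (p ^ r))) := by
  haveI hpf : Fact p.Prime := ⟨hp⟩
  have hp1 : 1 < p := hp.one_lt
  haveI : NeZero p := ⟨by omega⟩
  haveI : NeZero (p ^ r) := ⟨pow_ne_zero _ (by omega)⟩
  have hrne : r ≠ 0 := by omega
  obtain ⟨A, hA⟩ := Stmt6.exists_good p n k hk h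
  set M : Fin k → Matrix (Fin n) (Fin n) (ZMod (p ^ r)) :=
    fun l => Matrix.of fun i j => (((A l i j).val : ℕ) : ZMod (p ^ r)) with hM
  haveI hfin : Finite (Stmt6.Gr p r n k M) := Finite.of_equiv _ Stmt6.Gr.toProd.symm
  refine ⟨Stmt6.Gr p r n k M, inferInstance, hfin, ?_, ?_⟩
  · -- it is a p-group
    apply IsPGroup.of_card (n := r * n + r * k)
    rw [Nat.card_congr Stmt6.Gr.toProd, Nat.card_prod, Nat.card_pi, Nat.card_pi]
    simp only [Nat.card_zmod]
    rw [Finset.prod_const, Finset.prod_const, Finset.card_univ, Finset.card_univ,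
      Fintype.card_fin, Fintype.card_fin, ← pow_mul, ← pow_mul, ← pow_add]
  -- the subgroup N
  let fhom : Stmt6.Gr p r n k M →* Multiplicative (Fin n → ZMod (p ^ r)) :=
    { toFun := fun x => Multiplicative.ofAdd x.v
      map_one' := rfl
      map_mul' := fun x y => rfl }
  refine ⟨fhom.ker, ?_, ?_, ⟨fhom, fun z => ⟨⟨Multiplicative.toAdd z, 0⟩, rfl⟩, rfl⟩, ?_⟩
  · -- commutator
    rw [commutator_def, Subgroup.commutator_le]
    intro g _ g' _
    rw [MonoidHom.mem_ker, map_commutatorElement]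
    exact commutatorElement_eq_one_iff_commute.2 (mul_comm _ _)
  · -- center
    intro x hx
    rw [MonoidHom.mem_ker] at hx
    have hxv : x.v = 0 := by
      have h2 : Multiplicative.toAdd (Multiplicative.ofAdd x.v) = Multiplicative.toAdd
          (1 : Multiplicative (Fin n → ZMod (p ^ r))) := congrArg _ hx
      simpa using h2
    rw [Subgroup.mem_center_iff]
    intro g
    apply Stmt6.Gr.ext'
    · simp only [Stmt6.Gr.mul_v, hxv, add_zero, zero_add]
    · simp only [Stmt6.Gr.mul_w, hxv]
      funext l
      simp only [Pi.add_apply, Stmt6.bilf_zero_left, Stmt6.bilf_zero_right]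
      ring
  · -- no large homocyclic subgroup
    rintro ⟨H, ⟨e⟩⟩
    let P := Fin (2 * k) → ZMod (p ^ r)
    let τ : P → Stmt6.Gr p r n k M :=
      fun x => ((e.symm (Multiplicative.ofAdd x) : H) : Stmt6.Gr p r n k M)
    have τ_mul : ∀ x y : P, τ (x + y) = τ x * τ y := by
      intro x y
      show ((e.symm (Multiplicative.ofAdd (x + y)) : H) : Stmt6.Gr p r n k M) = _
      have h1 : Multiplicative.ofAdd (x + y) =
          Multiplicative.ofAdd x * Multiplicative.ofAdd y := rfl
      rw [h1, map_mul]
      rfl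
    have τ_one : τ 0 = 1 := by
      show ((e.symm (Multiplicative.ofAdd (0 : P)) : H) : Stmt6.Gr p r n k M) = 1
      have h1 : Multiplicative.ofAdd (0 : P) = 1 := rfl
      rw [h1, map_one]
      rfl
    have τ_inj : Function.Injective τ := by
      intro x y hxy
      have h1 : e.symm (Multiplicative.ofAdd x) = e.symm (Multiplicative.ofAdd y) :=
        Subtype.ext hxy
      have h2 := e.symm.injective h1
      exact Multiplicative.ofAdd.injective h2
    have τ_pow : ∀ (x : P) (m : ℕ), τ (m • x) = (τ x) ^ m := by
      intro x m
      induction m with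
      | zero => rw [zero_smul, pow_zero, τ_one]
      | succ m ih => rw [succ_nsmul, τ_mul, ih, pow_succ]
    let ρ : P →+ (Fin n → ZMod (p ^ r)) := AddMonoidHom.mk' (fun x => (τ x).v)
      (fun x y => by show (τ (x + y)).v = (τ x).v + (τ y).v; rw [τ_mul]; rfl)
    have bilsymm : ∀ x y : P, ∀ l, Stmt6.bilf (M l) (ρ x) (ρ y) =
        Stmt6.bilf (M l) (ρ y) (ρ x) := by
      intro x y l
      have hcomm : τ x * τ y = τ y * τ x := by rw [← τ_mul, ← τ_mul, add_comm]
      have hw := congrArg Stmt6.Gr.w hcomm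
      simp only [Stmt6.Gr.mul_w] at hw
      have h3 := congrFun hw l
      simp only [Pi.add_apply] at h3
      show Stmt6.bilf (M l) (τ x).v (τ y).v = Stmt6.bilf (M l) (τ y).v (τ x).v
      linear_combination h3
    set s := r - 1 with hsdef
    have hs : s + 1 = r := by omega
    let ψ : P →+ (Fin n → ZMod (p ^ r)) := AddMonoidHom.mk' (fun x => ρ ((p ^ s) • x))
      (fun x y => by
        show ρ ((p ^ s) • (x + y)) = ρ ((p ^ s) • x) + ρ ((p ^ s) • y)
        rw [smul_add, map_add])
    have hP : Nat.card P = p ^ (r * (2 * k)) := by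
      rw [Nat.card_pi]
      simp only [Nat.card_zmod]
      rw [Finset.prod_const, Finset.card_univ, Fintype.card_fin, ← pow_mul]
    let m1 : P →+ P := AddMonoidHom.mk' (fun x => (p ^ s) • x) (fun x y => smul_add _ _ _)
    let lam : ψ.ker →+ P := m1.comp ψ.ker.subtype
    have hkerlam : Nat.card lam.ker ≤ p ^ (s * (2 * k)) := by
      rw [← Stmt6.card_pi_smul p r s (2 * k) hp1 hr (by omega)]
      apply Nat.card_le_card_of_injective
        (f := fun x : lam.ker => (⟨((x : ψ.ker) : P), by
          have h2 := x.2
          rwa [AddMonoidHom.mem_ker] at h2⟩ : {z : P // (p ^ s) • z = 0}))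
      intro a b hab
      have h9 := congrArg Subtype.val hab
      exact Subtype.ext (Subtype.ext h9)
    have keyr : ∀ z : P, z ∈ lam.range → (τ z).v = 0 ∧ p • (τ z).w = 0 := by
      intro z hz
      obtain ⟨x, hx⟩ := hz
      have hz1 : z = (p ^ s) • (x : P) := hx.symm
      have hρ : ρ z = 0 := by
        rw [hz1]
        have h2 := x.2
        rwa [AddMonoidHom.mem_ker] at h2
      have hpz : p • z = 0 := by
        rw [hz1, smul_smul]
        have h4 : p * p ^ s = p ^ r := by rw [← pow_succ']; congr 1
        rw [h4]
        funext i
        show (p ^ r) • ((x : P) i) = 0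
        rw [nsmul_eq_mul, ZMod.natCast_self, zero_mul]
      refine ⟨hρ, ?_⟩
      have h1 : (τ z) ^ p = 1 := by rw [← τ_pow, hpz, τ_one]
      have h2 : τ z = (⟨0, (τ z).w⟩ : Stmt6.Gr p r n k M) := Stmt6.Gr.ext' hρ rfl
      rw [h2, Stmt6.Gr.central_pow] at h1
      have h5 := congrArg Stmt6.Gr.w h1
      simpa [Stmt6.Gr.one_w] using h5
    have hranglam : Nat.card lam.range ≤ p ^ (1 * k) := by
      rw [← Stmt6.card_pi_smul p r 1 k hp1 hr (by omega)]
      apply Nat.card_le_card_of_injective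
        (f := fun y : lam.range => (⟨(τ (y : P)).w, by
          rw [pow_one]; exact (keyr _ y.2).2⟩ : {w : Fin k → ZMod (p ^ r) // (p ^ 1) • w = 0}))
      intro a b hab
      apply Subtype.ext
      apply τ_inj
      apply Stmt6.Gr.ext'
      · rw [(keyr _ a.2).1, (keyr _ b.2).1]
      · have h9 := congrArg Subtype.val hab
        exact h9
    have hker : Nat.card ψ.ker ≤ p ^ (1 * k) * p ^ (s * (2 * k)) := by
      rw [Stmt6.card_ker_range lam]
      exact Nat.mul_le_mul hranglam hkerlam
    -- the reduction mod p and the span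
    let red : (Fin n → ZMod (p ^ r)) → (Fin n → ZMod p) :=
      fun v i => ZMod.castHom (dvd_pow_self p hrne) (ZMod p) (v i)
    let Abar : Submodule (ZMod p) (Fin n → ZMod p) :=
      Submodule.span (ZMod p) (Set.range fun x : P => red (ρ x))
    let Θ : (Fin n → ZMod p) → (Fin n → ZMod (p ^ r)) :=
      fun z i => ((p ^ s * (z i).val : ℕ) : ZMod (p ^ r))
    have scalar : ∀ c : ZMod (p ^ r), (p ^ s) • c =
        ((p ^ s * ((ZMod.castHom (dvd_pow_self p hrne) (ZMod p) c).val) : ℕ) : ZMod (p ^ r)) := by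
      intro c
      obtain ⟨m, rfl⟩ : ∃ m : ℕ, ((m : ZMod (p ^ r))) = c :=
        ⟨c.val, ZMod.natCast_rightInverse c⟩
      have hm2 : p ^ s * m = p ^ r * (m / p) + p ^ s * (m % p) := by
        have h6 := (Nat.div_add_mod m p).symm
        calc p ^ s * m = p ^ s * (p * (m / p) + m % p) := by rw [← h6]
          _ = (p ^ s * p) * (m / p) + p ^ s * (m % p) := by ring
          _ = p ^ r * (m / p) + p ^ s * (m % p) := by rw [← pow_succ, hs]
      rw [map_natCast, ZMod.val_natCast, nsmul_eq_mul, ← Nat.cast_mul, hm2,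
        Nat.cast_add, Nat.cast_mul, ZMod.natCast_self, zero_mul, zero_add]
    have hfact : ∀ x : P, ψ x = Θ (red (ρ x)) := by
      intro x
      have h7 : ψ x = (p ^ s) • ρ x := by
        show ρ ((p ^ s) • x) = (p ^ s) • ρ x
        rw [map_nsmul]
      funext i
      rw [h7]
      show (p ^ s) • (ρ x i) = ((p ^ s * ((red (ρ x)) i).val : ℕ) : ZMod (p ^ r))
      exact scalar (ρ x i)
    have hrange_sub : (ψ.range : Set (Fin n → ZMod (p ^ r))) ⊆ Θ '' (Abar : Set _) := by
      rintro v ⟨x, rfl⟩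
      refine ⟨red (ρ x), Submodule.subset_span ⟨x, rfl⟩, ?_⟩
      exact (hfact x).symm
    have hcard_range : Nat.card ψ.range ≤ Nat.card Abar := by
      calc Nat.card ψ.range = (ψ.range : Set (Fin n → ZMod (p ^ r))).ncard :=
            Nat.card_coe_set_eq _
        _ ≤ (Θ '' (Abar : Set (Fin n → ZMod p))).ncard :=
            Set.ncard_le_ncard hrange_sub (Set.toFinite _)
        _ ≤ (Abar : Set (Fin n → ZMod p)).ncard := Set.ncard_image_le (Set.toFinite _)
        _ = Nat.card Abar := (Nat.card_coe_set_eq _).symm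
    haveI : Fintype ↥Abar := Fintype.ofFinite _
    have hAcard : Nat.card Abar = p ^ (Module.finrank (ZMod p) Abar) := by
      rw [Nat.card_eq_fintype_card, Module.card_eq_pow_finrank (K := ZMod p), ZMod.card]
    have hfr : k ≤ Module.finrank (ZMod p) Abar := by
      have hky : p ^ (r * (2 * k)) ≤
          p ^ (Module.finrank (ZMod p) Abar) * (p ^ (1 * k) * p ^ (s * (2 * k))) := by
        rw [← hP, Stmt6.card_ker_range ψ, ← hAcard]
        exact Nat.mul_le_mul hcard_range hker
      rw [← pow_add, ← pow_add] at hky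
      have h8 := (Nat.pow_le_pow_iff_right hp1).1 hky
      have hr2 : r * (2 * k) = s * (2 * k) + 2 * k := by
        calc r * (2 * k) = (s + 1) * (2 * k) := by rw [hs]
          _ = s * (2 * k) + 2 * k := by ring
      rw [hr2] at h8
      generalize hst : s * (2 * k) = t at h8
      omega
    haveI : FiniteDimensional (ZMod p) Abar := inferInstance
    let b := Module.finBasis (ZMod p) Abar
    let u : Fin k → (Fin n → ZMod p) := fun i => ((b (Fin.castLE hfr i)) : Fin n → ZMod p)
    have hu : LinearIndependent (ZMod p) u := by
      have h1 := b.linearIndependent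
      have h2 := h1.map' Abar.subtype Abar.ker_subtype
      exact h2.comp (Fin.castLE hfr) (Fin.castLE_injective hfr)
    have base : ∀ x ∈ Set.range (fun x : P => red (ρ x)),
        ∀ y ∈ Set.range (fun x : P => red (ρ x)), ∀ l,
        Stmt6.bilf (A l) x y = Stmt6.bilf (A l) y x := by
      rintro _ ⟨x, rfl⟩ _ ⟨y, rfl⟩ l
      have h1 : (M l).map (ZMod.castHom (dvd_pow_self p hrne) (ZMod p)) = A l := by
        ext i j
        show ZMod.castHom (dvd_pow_self p hrne) (ZMod p) (((A l i j).val : ℕ) : ZMod (p ^ r))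
          = A l i j
        rw [map_natCast]
        exact ZMod.natCast_rightInverse _
      have hmap : ∀ v w : Fin n → ZMod (p ^ r),
          Stmt6.bilf (A l) (red v) (red w) =
          ZMod.castHom (dvd_pow_self p hrne) (ZMod p) (Stmt6.bilf (M l) v w) := by
        intro v w
        calc Stmt6.bilf (A l) (red v) (red w)
            = Stmt6.bilf ((M l).map (ZMod.castHom (dvd_pow_self p hrne) (ZMod p)))
                ((ZMod.castHom (dvd_pow_self p hrne) (ZMod p)) ∘ v)
                ((ZMod.castHom (dvd_pow_self p hrne) (ZMod p)) ∘ w) := by rw [h1]; rfl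
          _ = ZMod.castHom (dvd_pow_self p hrne) (ZMod p) (Stmt6.bilf (M l) v w) :=
              Stmt6.bilf_map _ _ _ _
      rw [hmap, hmap, bilsymm x y l]
    have inner : ∀ x ∈ Set.range (fun x : P => red (ρ x)), ∀ y ∈ Abar, ∀ l,
        Stmt6.bilf (A l) x y = Stmt6.bilf (A l) y x := by
      intro x hx y hy
      refine Submodule.span_induction
        (p := fun y _ => ∀ l, Stmt6.bilf (A l) x y = Stmt6.bilf (A l) y x) ?_ ?_ ?_ ?_ hy
      · intro z hz l; exact base x hx z hz l
      · intro l; rw [Stmt6.bilf_zero_left, Stmt6.bilf_zero_right]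
      · intro a c _ _ ha hc l
        rw [Stmt6.bilf_add_right, Stmt6.bilf_add_left, ha l, hc l]
      · intro cc a _ ha l
        rw [Stmt6.bilf_smul_right, Stmt6.bilf_smul_left, ha l]
    have vanish : ∀ x ∈ Abar, ∀ y ∈ Abar, ∀ l,
        Stmt6.bilf (A l) x y = Stmt6.bilf (A l) y x := by
      intro x hx
      refine Submodule.span_induction
        (p := fun x _ => ∀ y ∈ Abar, ∀ l, Stmt6.bilf (A l) x y = Stmt6.bilf (A l) y x)
        ?_ ?_ ?_ ?_ hx
      · exact inner
      · intro y hy l; rw [Stmt6.bilf_zero_left, Stmt6.bilf_zero_right]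
      · intro a c _ _ ha hc y hy l
        rw [Stmt6.bilf_add_left, Stmt6.bilf_add_right, ha y hy l, hc y hy l]
      · intro cc a _ ha y hy l
        rw [Stmt6.bilf_smul_left, Stmt6.bilf_smul_right, ha y hy l]
    exact hA ⟨u, hu, fun l i j =>
      vanish (u i) (SetLike.coe_mem _) (u j) (SetLike.coe_mem _) l⟩
end

section
/- Let p be a prime, n a positive integer, and A an abelian subgroup of GL(n, F_p) whose order is coprime to p. Then |A| ≤ p^n − 1. -/
open Module

private lemma nat_mul_pow_aux {x y : ℕ} (hx : 1 ≤ x) (hy : 1 ≤ y) :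
    (x - 1) * (y - 1) ≤ x * y - 1 := by
  obtain ⟨x', rfl⟩ : ∃ x', x = x' + 1 := ⟨x - 1, by omega⟩
  obtain ⟨y', rfl⟩ : ∃ y', y = y' + 1 := ⟨y - 1, by omega⟩
  have h : (x' + 1) * (y' + 1) = x' * y' + (x' + y' + 1) := by ring
  simp only [Nat.add_sub_cancel, h]
  rw [Nat.add_sub_assoc (by omega)]
  exact Nat.le_add_right _ _

private theorem aux_14 (p : ℕ) (hp : p.Prime) (n : ℕ) :
    ∀ (V : Type) [AddCommGroup V] [Module (ZMod p) V]
      [Module.Finite (ZMod p) V],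
      Module.finrank (ZMod p) V = n → 0 < n →
      ∀ A : Subgroup (LinearMap.GeneralLinearGroup (ZMod p) V),
        (∀ x ∈ A, ∀ y ∈ A, x * y = y * x) →
        Nat.Coprime (Nat.card A) p →
        Nat.card A ≤ p ^ n - 1 := by
  induction n using Nat.strong_induction_on with
  | _ n IH =>
  intro V _ _ _ hrank hn A hA hcop
  haveI : Fact p.Prime := ⟨hp⟩
  haveI : Finite V := Module.finite_of_finite (ZMod p)
  haveI : Nontrivial V :=
    Module.nontrivial_of_finrank_pos (R := ZMod p) (by rw [hrank]; exact hn)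
  haveI : Finite (V →ₗ[ZMod p] V) := Finite.of_injective _ DFunLike.coe_injective
  by_cases hirr : ∀ W : Submodule (ZMod p) V,
      (∀ a : LinearMap.GeneralLinearGroup (ZMod p) V, a ∈ A →
        ∀ w ∈ W, (a : V →ₗ[ZMod p] V) w ∈ W) → W = ⊥ ∨ W = ⊤
  · -- irreducible case
    obtain ⟨v, hv⟩ := Module.finrank_pos_iff_exists_ne_zero
      (R := ZMod p) (M := V) |>.mp (by rw [hrank]; exact hn)
    have hnz : ∀ a : A, ((a : LinearMap.GeneralLinearGroup (ZMod p) V) : V →ₗ[ZMod p] V) v ≠ 0 := by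
      intro a h
      apply hv
      calc v = ((((a : LinearMap.GeneralLinearGroup (ZMod p) V))⁻¹ *
              (a : LinearMap.GeneralLinearGroup (ZMod p) V) :
              LinearMap.GeneralLinearGroup (ZMod p) V) : V →ₗ[ZMod p] V) v := by
            rw [inv_mul_cancel]; rfl
        _ = (((a : LinearMap.GeneralLinearGroup (ZMod p) V)⁻¹ :
              LinearMap.GeneralLinearGroup (ZMod p) V) : V →ₗ[ZMod p] V)
              (((a : LinearMap.GeneralLinearGroup (ZMod p) V) : V →ₗ[ZMod p] V) v) := rfl
        _ = 0 := by rw [h, map_zero]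
    have hinj : Function.Injective
        (fun a : A => (⟨_, hnz a⟩ : {x : V // x ≠ 0})) := by
      intro a b hab
      rw [Subtype.ext_iff] at hab
      simp only at hab
      set g : LinearMap.GeneralLinearGroup (ZMod p) V := (↑a)⁻¹ * ↑b with hg
      have hgA : g ∈ A := A.mul_mem (A.inv_mem a.2) b.2
      have hgv : (g : V →ₗ[ZMod p] V) v = v := by
        have h1 : (g : V →ₗ[ZMod p] V) v
            = (((a : LinearMap.GeneralLinearGroup (ZMod p) V)⁻¹ :
              LinearMap.GeneralLinearGroup (ZMod p) V) : V →ₗ[ZMod p] V)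
              (((b : LinearMap.GeneralLinearGroup (ZMod p) V) : V →ₗ[ZMod p] V) v) := rfl
        rw [h1, ← hab]
        calc (((a : LinearMap.GeneralLinearGroup (ZMod p) V)⁻¹ :
              LinearMap.GeneralLinearGroup (ZMod p) V) : V →ₗ[ZMod p] V)
              (((a : LinearMap.GeneralLinearGroup (ZMod p) V) : V →ₗ[ZMod p] V) v)
            = ((((a : LinearMap.GeneralLinearGroup (ZMod p) V))⁻¹ *
              (a : LinearMap.GeneralLinearGroup (ZMod p) V) :
              LinearMap.GeneralLinearGroup (ZMod p) V) : V →ₗ[ZMod p] V) v := rfl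
          _ = v := by rw [inv_mul_cancel]; rfl
      set K : Submodule (ZMod p) V :=
        LinearMap.ker ((g : V →ₗ[ZMod p] V) - LinearMap.id) with hK
      have hKmem : ∀ w, w ∈ K ↔ (g : V →ₗ[ZMod p] V) w = w := by
        intro w
        simp [hK, LinearMap.mem_ker, sub_eq_zero]
      have hKinv : ∀ x : LinearMap.GeneralLinearGroup (ZMod p) V, x ∈ A →
          ∀ w ∈ K, (x : V →ₗ[ZMod p] V) w ∈ K := by
        intro x hx w hw
        rw [hKmem] at hw ⊢
        have hcomm : g * x = x * g := hA g hgA x hx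
        calc (g : V →ₗ[ZMod p] V) ((x : V →ₗ[ZMod p] V) w)
            = ((g * x : LinearMap.GeneralLinearGroup (ZMod p) V) : V →ₗ[ZMod p] V) w := rfl
          _ = ((x * g : LinearMap.GeneralLinearGroup (ZMod p) V) : V →ₗ[ZMod p] V) w := by
              rw [hcomm]
          _ = (x : V →ₗ[ZMod p] V) ((g : V →ₗ[ZMod p] V) w) := rfl
          _ = (x : V →ₗ[ZMod p] V) w := by rw [hw]
      have hKtop : K = ⊤ := by
        rcases hirr K hKinv with h | h
        · exfalso
          apply hv
          have : v ∈ K := (hKmem v).mpr hgv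
          rw [h] at this
          simpa using this
        · exact h
      have hg1 : g = 1 := by
        apply Units.ext
        apply LinearMap.ext
        intro w
        have : w ∈ K := hKtop ▸ Submodule.mem_top
        rw [hKmem] at this
        simpa using this
      have : (↑a : LinearMap.GeneralLinearGroup (ZMod p) V) = ↑b := by
        rw [hg] at hg1
        exact (inv_mul_eq_one.mp hg1)
      exact Subtype.ext this
    have hle := Nat.card_le_card_of_injective _ hinj
    have hcard : Nat.card {x : V // x ≠ 0} = p ^ n - 1 := by
      classical
      haveI := Fintype.ofFinite V
      rw [Nat.card_eq_fintype_card]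
      have h1 : Fintype.card {x : V // x ≠ 0} = Fintype.card V - 1 := by
        rw [Fintype.card_subtype_compl (· = 0), Fintype.card_subtype_eq]
      have h2 : Fintype.card V = p ^ n := by
        rw [card_eq_pow_finrank (K := ZMod p), ZMod.card, hrank]
      rw [h1, h2]
    rwa [hcard] at hle
  · -- reducible case
    push_neg at hirr
    obtain ⟨W, hWinv, hWbot, hWtop⟩ := hirr
    haveI : Nontrivial W := Submodule.nontrivial_iff_ne_bot.mpr hWbot
    haveI : Nontrivial (V ⧸ W) := Submodule.Quotient.nontrivial_iff.mpr hWtop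
    set k := Module.finrank (ZMod p) W with hk
    set m := Module.finrank (ZMod p) (V ⧸ W) with hm
    have hkpos : 0 < k := Module.finrank_pos_iff.mpr ‹_›
    have hmpos : 0 < m := Module.finrank_pos_iff.mpr ‹_›
    have hkm : m + k = n := by rw [hk, hm, ← hrank]; exact Submodule.finrank_quotient_add_finrank W
    have hklt : k < n := by omega
    have hmlt : m < n := by omega
    -- invariance of W under elements of A
    have hWinv' : ∀ a : A, ∀ w ∈ W, ((a : LinearMap.GeneralLinearGroup (ZMod p) V) :
        V →ₗ[ZMod p] V) w ∈ W := fun a => hWinv _ a.2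
    have hWcomap : ∀ a : A, W ≤ W.comap ((a : LinearMap.GeneralLinearGroup (ZMod p) V) :
        V →ₗ[ZMod p] V) := fun a w hw => hWinv' a w hw
    -- restriction homomorphism
    set r : A → (W →ₗ[ZMod p] W) := fun a =>
      LinearMap.restrict _ (fun x hx => hWinv' a x hx) with hr
    have hr_mul : ∀ a b : A, r (a * b) = r a * r b := by
      intro a b
      apply LinearMap.ext
      intro w
      apply Subtype.ext
      simp [hr, LinearMap.restrict_apply, Module.End.mul_apply, Units.val_mul]
    have hr_one : r 1 = 1 := by
      apply LinearMap.ext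
      intro w
      apply Subtype.ext
      simp [hr, LinearMap.restrict_apply]
    set φ₁ : A →* LinearMap.GeneralLinearGroup (ZMod p) W :=
      { toFun := fun a =>
          { val := r a
            inv := r a⁻¹
            val_inv := by rw [← hr_mul, mul_inv_cancel, hr_one]
            inv_val := by rw [← hr_mul, inv_mul_cancel, hr_one] }
        map_one' := Units.ext hr_one
        map_mul' := fun a b => Units.ext (hr_mul a b) } with hφ₁
    -- quotient homomorphism
    set s : A → ((V ⧸ W) →ₗ[ZMod p] (V ⧸ W)) := fun a =>
      Submodule.mapQ W W _ (hWcomap a) with hs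
    have hs_mul : ∀ a b : A, s (a * b) = s a * s b := by
      intro a b
      apply Submodule.linearMap_qext
      apply LinearMap.ext
      intro x
      simp [hs, Submodule.mapQ_apply, Module.End.mul_apply, Units.val_mul]
    have hs_one : s 1 = 1 := by
      apply Submodule.linearMap_qext
      apply LinearMap.ext
      intro x
      simp [hs, Submodule.mapQ_apply]
    set φ₂ : A →* LinearMap.GeneralLinearGroup (ZMod p) (V ⧸ W) :=
      { toFun := fun a =>
          { val := s a
            inv := s a⁻¹
            val_inv := by rw [← hs_mul, mul_inv_cancel, hs_one]
            inv_val := by rw [← hs_mul, inv_mul_cancel, hs_one] }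
        map_one' := Units.ext hs_one
        map_mul' := fun a b => Units.ext (hs_mul a b) } with hφ₂
    -- kernel of the pair is trivial
    have hker : ∀ a : A, φ₁ a = 1 → φ₂ a = 1 → a = 1 := by
      intro a h1 h2
      set f : Module.End (ZMod p) V :=
        ((a : LinearMap.GeneralLinearGroup (ZMod p) V) : V →ₗ[ZMod p] V) with hf
      have hfix : ∀ w : V, w ∈ W → f w = w := by
        intro w hw
        have := congrArg Units.val h1
        have h := congrArg (fun g => g ⟨w, hw⟩) this
        simpa [hφ₁, hr, LinearMap.restrict_apply, Subtype.ext_iff] using h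
      have hsub : ∀ x : V, f x - x ∈ W := by
        intro x
        have := congrArg Units.val h2
        have h := congrArg (fun g => g (Submodule.Quotient.mk x)) this
        simp only [hs, Submodule.mapQ_apply, Units.val_one, Module.End.one_apply] at h
        exact (Submodule.Quotient.eq W).mp h
      set x : Module.End (ZMod p) V := f - 1 with hx
      have hx2 : x * x = 0 := by
        apply LinearMap.ext
        intro y
        have h1' : x y = f y - y := by simp [hx]
        have h2' : x y ∈ W := by rw [h1']; exact hsub y
        have : x (x y) = f (x y) - x y := by simp [hx]
        rw [Module.End.mul_apply, this, hfix _ h2', sub_self]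
        rfl
      haveI : CharP (Module.End (ZMod p) V) p := by
        apply charP_of_injective_algebraMap
          (R := ZMod p) (A := Module.End (ZMod p) V)
        intro c d hcd
        obtain ⟨v₀, hv₀⟩ := exists_ne (0 : V)
        have := congrArg (fun g : Module.End (ZMod p) V => g v₀) hcd
        simp only [Module.algebraMap_end_apply] at this
        have hsub : (c - d) • v₀ = 0 := by rw [sub_smul, this, sub_self]
        rcases smul_eq_zero.mp hsub with h | h
        · exact sub_eq_zero.mp h
        · exact absurd h hv₀
      have hfp : f ^ p = 1 := by
        have hcomm : Commute (1 : Module.End (ZMod p) V) x := Commute.one_left x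
        have : f = 1 + x := by simp [hx]
        rw [this, add_pow_char_of_commute p hcomm, one_pow]
        have hxp : x ^ p = 0 := by
          have h2le : 2 ≤ p := hp.two_le
          calc x ^ p = x * x * x ^ (p - 2) := by
                rw [← pow_two, ← pow_add]
                congr 1
                omega
            _ = 0 := by rw [hx2, zero_mul]
        rw [hxp, add_zero]
      have hap : a ^ p = 1 := by
        have : ((a : LinearMap.GeneralLinearGroup (ZMod p) V)) ^ p = 1 := by
          apply Units.ext
          rw [Units.val_pow_eq_pow_val, Units.val_one]
          exact hfp
        apply Subtype.ext
        rw [SubmonoidClass.coe_pow]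
        exact this
      have hord : orderOf a ∣ p := orderOf_dvd_of_pow_eq_one hap
      have hord' : orderOf a ∣ Nat.card A := orderOf_dvd_natCard a
      have : orderOf a ∣ Nat.gcd (Nat.card A) p := Nat.dvd_gcd hord' hord
      rw [hcop] at this
      exact orderOf_eq_one_iff.mp (Nat.dvd_one.mp this)
    -- ranges
    set A₁ := φ₁.range with hA₁
    set A₂ := φ₂.range with hA₂
    haveI : Finite W := Module.finite_of_finite (ZMod p)
    haveI : Finite (V ⧸ W) := Module.finite_of_finite (ZMod p)
    haveI : Finite (W →ₗ[ZMod p] W) := Finite.of_injective _ DFunLike.coe_injective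
    haveI : Finite ((V ⧸ W) →ₗ[ZMod p] (V ⧸ W)) := Finite.of_injective _ DFunLike.coe_injective
    have hinj : Function.Injective (fun a : A =>
        ((⟨φ₁ a, MonoidHom.mem_range.mpr ⟨a, rfl⟩⟩ : A₁), (⟨φ₂ a, MonoidHom.mem_range.mpr ⟨a, rfl⟩⟩ : A₂))) := by
      intro a b hab
      have h1 : φ₁ a = φ₁ b := Subtype.ext_iff.mp (Prod.ext_iff.mp hab).1
      have h2 : φ₂ a = φ₂ b := Subtype.ext_iff.mp (Prod.ext_iff.mp hab).2
      have : a * b⁻¹ = 1 := by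
        apply hker
        · rw [map_mul, map_inv, h1, mul_inv_cancel]
        · rw [map_mul, map_inv, h2, mul_inv_cancel]
      exact mul_inv_eq_one.mp this
    have hle : Nat.card A ≤ Nat.card A₁ * Nat.card A₂ := by
      have := Nat.card_le_card_of_injective _ hinj
      rwa [Nat.card_prod] at this
    -- A₁ bound
    have hcard₁dvd : Nat.card A₁ ∣ Nat.card A := by
      have e := QuotientGroup.quotientKerEquivRange φ₁
      rw [show (Nat.card A₁ : ℕ) = Nat.card (A ⧸ φ₁.ker) from
        (Nat.card_congr e.toEquiv).symm]
      exact Subgroup.card_quotient_dvd_card _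
    have hcard₂dvd : Nat.card A₂ ∣ Nat.card A := by
      have e := QuotientGroup.quotientKerEquivRange φ₂
      rw [show (Nat.card A₂ : ℕ) = Nat.card (A ⧸ φ₂.ker) from
        (Nat.card_congr e.toEquiv).symm]
      exact Subgroup.card_quotient_dvd_card _
    have hcomm₁ : ∀ x ∈ A₁, ∀ y ∈ A₁, x * y = y * x := by
      rintro x ⟨a, rfl⟩ y ⟨b, rfl⟩
      rw [← map_mul, ← map_mul]
      congr 1
      exact Subtype.ext (hA _ a.2 _ b.2)
    have hcomm₂ : ∀ x ∈ A₂, ∀ y ∈ A₂, x * y = y * x := by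
      rintro x ⟨a, rfl⟩ y ⟨b, rfl⟩
      rw [← map_mul, ← map_mul]
      congr 1
      exact Subtype.ext (hA _ a.2 _ b.2)
    have hb₁ : Nat.card A₁ ≤ p ^ k - 1 :=
      IH k hklt W hk.symm hkpos A₁ hcomm₁ (Nat.Coprime.coprime_dvd_left hcard₁dvd hcop)
    have hb₂ : Nat.card A₂ ≤ p ^ m - 1 :=
      IH m hmlt (V ⧸ W) hm.symm hmpos A₂ hcomm₂ (Nat.Coprime.coprime_dvd_left hcard₂dvd hcop)
    calc Nat.card A ≤ Nat.card A₁ * Nat.card A₂ := hle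
      _ ≤ (p ^ k - 1) * (p ^ m - 1) := Nat.mul_le_mul hb₁ hb₂
      _ ≤ p ^ k * p ^ m - 1 := nat_mul_pow_aux
          (Nat.one_le_pow _ _ hp.pos) (Nat.one_le_pow _ _ hp.pos)
      _ = p ^ n - 1 := by rw [← pow_add]; congr 2; omega

/-- If `A` is an abelian subgroup of `GL(n, F_p)` whose order is coprime to `p`,
then `|A| ≤ pⁿ - 1`. -/
theorem stmt_14 (p n : ℕ) (hp : p.Prime) (hn : 0 < n)
    (A : Subgroup (Matrix.GeneralLinearGroup (Fin n) (ZMod p)))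
    (hA : ∀ x ∈ A, ∀ y ∈ A, x * y = y * x)
    (hcop : Nat.Coprime (Nat.card A) p) :
    Nat.card A ≤ p ^ n - 1 := by
  haveI : Fact p.Prime := ⟨hp⟩
  set e : Matrix.GeneralLinearGroup (Fin n) (ZMod p) ≃*
      LinearMap.GeneralLinearGroup (ZMod p) (Fin n → ZMod p) :=
    Matrix.GeneralLinearGroup.toLin with he
  set A' := A.map e.toMonoidHom with hA'
  have hcard : Nat.card A = Nat.card A' :=
    Nat.card_congr (A.equivMapOfInjective e.toMonoidHom e.injective).toEquiv
  have hcomm' : ∀ x ∈ A', ∀ y ∈ A', x * y = y * x := by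
    rintro x ⟨a, ha, rfl⟩ y ⟨b, hb, rfl⟩
    rw [← map_mul, ← map_mul, hA a ha b hb]
  have hrank : Module.finrank (ZMod p) (Fin n → ZMod p) = n :=
    Module.finrank_fin_fun (ZMod p)
  have := aux_14 p hp n (Fin n → ZMod p) hrank hn A' hcomm'
    (hcard ▸ hcop)
  rw [hcard]
  exact this
end
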